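/- Let S be a shrinking cellular automaton with global transition function Δ_S, and let x be a state such that there is a minimal t ∈ ℕ₊ with Δ_S^t(x^{2t+1}) = ε (the empty word). Then for all words z₁, z₂ over the input alphabet, z₁ x^{2t+1} z₂ ∈ L(S) if and only if z₁ x^{2t+1+i} z₂ ∈ L(S) for every i ∈ ℕ₀. -/

import Mathlib

/-- A shrinking cellular automaton over input alphabet `α`. -/
structure SCA (α : Type) where
  Q : Type
  fintypeQ : Fintype Q
  decEq : DecidableEq Q
  δ : Q → Q → Q → Q
  q : Q
  del : Q
  embed : α → Q
  accept : Q → Bool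
  del_ne_q : del ≠ q
  inactive : ∀ a b, δ a q b = q
  embed_ne_q : ∀ x, embed x ≠ q

namespace SCA
variable {α : Type} (S : SCA α)

/-- One application of the local rule to every cell (boundary cells see the
inactive state). -/
def raw (w : List S.Q) : List S.Q :=
  (List.range w.length).map fun i =>
    S.δ (if i = 0 then S.q else w.getD (i - 1) S.q) (w.getD i S.q) (w.getD (i + 1) S.q)

/-- The shrinking global transition: apply the local rule, then delete all
cells in the delete state. -/
def step (w : List S.Q) : List S.Q :=
  haveI := S.decEq
  (S.raw w).filter (fun c => decide (c ≠ S.del))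

/-- Configuration reached from input `w` after `t` shrinking transitions. -/
def conf (w : List α) (t : ℕ) : List S.Q := S.step^[t] (w.map S.embed)

/-- `S` accepts `w` at step `t`: the leftmost active cell is accepting. -/
def AcceptsAt (w : List α) (t : ℕ) : Prop :=
  haveI := S.decEq
  ∃ a, ((S.conf w t).dropWhile (fun c => decide (c = S.q))).head? = some a ∧
    S.accept a = true

/-- The language accepted by `S`. -/
def Lang : Set (List α) := {w | ∃ t, S.AcceptsAt w t}

end SCA

/-- `L ∈ SCA[O(T)]`. -/
def InSCA {α : Type} (L : Set (List α)) (T : ℕ → ℕ) : Prop :=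
  ∃ (S : SCA α) (C : ℕ), S.Lang = L ∧
    ∀ w ∈ L, ∃ t ≤ C * T w.length + C, S.AcceptsAt w t

/-- `L ∈ SCA[o(n)]`. -/
def InSCAo {α : Type} (L : Set (List α)) : Prop :=
  ∃ (S : SCA α) (T : ℕ → ℕ), S.Lang = L ∧
    (∀ w ∈ L, ∃ t ≤ T w.length, S.AcceptsAt w t) ∧
    (∀ ε : ℝ, 0 < ε → ∀ᶠ n in Filter.atTop, (T n : ℝ) ≤ ε * n)

namespace SCA
variable {α : Type} (S : SCA α)

/-- Filter out delete cells. -/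
def fl (w : List S.Q) : List S.Q :=
  haveI := S.decEq
  w.filter (fun c => decide (c ≠ S.del))

/-- `front l w r`: the raw update of the cells of `w`, where the cell to the
left of `w` is `l` and the cell to the right of `w` is `r`. -/
def front : S.Q → List S.Q → S.Q → List S.Q
  | _, [], _ => []
  | l, a :: u, r => S.δ l a (u.headD r) :: front a u r

@[simp] lemma front_nil (l r : S.Q) : S.front l [] r = [] := rfl

@[simp] lemma front_cons (l a r : S.Q) (u : List S.Q) :
    S.front l (a :: u) r = S.δ l a (u.headD r) :: S.front a u r := by
  rw [front]

lemma raw'_eq_front (w : List S.Q) : ∀ l,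
    ((List.range w.length).map fun i =>
      S.δ (if i = 0 then l else w.getD (i - 1) S.q) (w.getD i S.q) (w.getD (i + 1) S.q))
      = S.front l w S.q := by
  induction w with
  | nil => intro l; rfl
  | cons a w ih =>
    intro l
    rw [List.length_cons, List.range_succ_eq_map, List.map_cons, List.map_map]
    have htail : ((List.range w.length).map
        ((fun i => S.δ (if i = 0 then l else (a :: w).getD (i - 1) S.q)
          ((a :: w).getD i S.q) ((a :: w).getD (i + 1) S.q)) ∘ Nat.succ))
        = S.front a w S.q := by
      rw [← ih a]
      apply List.map_congr_left
      intro i _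
      cases i with
      | zero => simp
      | succ n => simp
    rw [htail]
    have hhead : (S.δ (if 0 = 0 then l else (a :: w).getD (0 - 1) S.q)
        ((a :: w).getD 0 S.q) ((a :: w).getD (0 + 1) S.q))
        = S.δ l a (w.headD S.q) := by
      cases w <;> simp
    rw [hhead]
    cases w <;> simp

lemma raw_eq_front (w : List S.Q) : S.raw w = S.front S.q w S.q :=
  S.raw'_eq_front w S.q

lemma step_eq_fl_front (w : List S.Q) : S.step w = S.fl (S.front S.q w S.q) := by
  rw [← raw_eq_front]; rfl

lemma front_append : ∀ (u : List S.Q) (l : S.Q) (v : List S.Q) (r : S.Q),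
    S.front l (u ++ v) r = S.front l u (v.headD r) ++ S.front (u.getLastD l) v r := by
  intro u
  induction u with
  | nil => intro l v r; rfl
  | cons a u ih =>
    intro l v r
    have hh : (u ++ v).headD r = u.headD (v.headD r) := by cases u <;> simp
    simp only [List.cons_append, front_cons, hh, ih a v r, List.getLastD_cons]

lemma front_replicate_self (A r : S.Q) : ∀ k : ℕ,
    S.front A (List.replicate (k + 1) A) r
      = List.replicate k (S.δ A A A) ++ [S.δ A A r] := by
  intro k
  induction k with
  | zero => simp
  | succ k ih =>
    rw [List.replicate_succ, front_cons, ih]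
    simp [List.replicate_succ]

lemma front_replicate (l A r : S.Q) (k : ℕ) :
    S.front l (List.replicate (k + 2) A) r
      = [S.δ l A A] ++ List.replicate k (S.δ A A A) ++ [S.δ A A r] := by
  rw [List.replicate_succ, front_cons, S.front_replicate_self A r k]
  simp [List.replicate_succ]

lemma fl_append (u v : List S.Q) : S.fl (u ++ v) = S.fl u ++ S.fl v := by
  simp [fl, List.filter_append]

lemma fl_replicate_ne {c : S.Q} (h : c ≠ S.del) (n : ℕ) :
    S.fl (List.replicate n c) = List.replicate n c := by
  haveI := S.decEq
  unfold fl
  rw [List.filter_replicate, if_pos (by simp [h])]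

lemma fl_replicate_eq {c : S.Q} (h : c = S.del) (n : ℕ) :
    S.fl (List.replicate n c) = [] := by
  haveI := S.decEq
  unfold fl
  rw [List.filter_replicate, if_neg (by simp [h])]

/-- Key decomposition of one SCA step on a word with a long uniform block. -/
lemma step_decomp (P E : List S.Q) (A : S.Q) (k : ℕ) :
    S.step (P ++ List.replicate (k + 2) A ++ E) =
      (S.fl (S.front S.q P A) ++ S.fl [S.δ (P.getLastD S.q) A A]) ++
      S.fl (List.replicate k (S.δ A A A)) ++
      (S.fl [S.δ A A (E.headD S.q)] ++ S.fl (S.front A E S.q)) := by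
  rw [step_eq_fl_front, List.append_assoc, S.front_append P S.q (List.replicate (k + 2) A ++ E) S.q]
  rw [S.front_append (List.replicate (k + 2) A) (P.getLastD S.q) E S.q]
  have h1 : (List.replicate (k + 2) A ++ E).headD S.q = A := by
    rw [List.replicate_succ]; simp
  have h2 : (List.replicate (k + 2) A).getLastD (P.getLastD S.q) = A := by
    rw [List.replicate_succ']; exact List.getLastD_concat
  rw [h1, h2, S.front_replicate (P.getLastD S.q) A (E.headD S.q) k]
  simp only [fl_append, List.append_assoc]

/-- The uniform background state sequence. -/
def aseq (X : S.Q) : ℕ → S.Q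
  | 0 => X
  | s + 1 => S.δ (aseq X s) (aseq X s) (aseq X s)

@[simp] lemma aseq_zero (X : S.Q) : S.aseq X 0 = X := by rw [aseq]

@[simp] lemma aseq_succ (X : S.Q) (s : ℕ) :
    S.aseq X (s + 1) = S.δ (S.aseq X s) (S.aseq X s) (S.aseq X s) := by rw [aseq]

/-- While the background state has not become the delete state, a long uniform
block keeps a uniform middle whose surroundings do not depend on the block
length. -/
lemma good (X : S.Q) : ∀ s : ℕ, (∀ i, 1 ≤ i → i ≤ s → S.aseq X i ≠ S.del) →
    ∀ (u v : List S.Q) (m m' : ℕ), 2 * s + 1 ≤ m → 2 * s + 1 ≤ m' →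
    ∃ P E : List S.Q,
      S.step^[s] (u ++ List.replicate m X ++ v)
        = P ++ List.replicate (m - 2 * s) (S.aseq X s) ++ E ∧
      S.step^[s] (u ++ List.replicate m' X ++ v)
        = P ++ List.replicate (m' - 2 * s) (S.aseq X s) ++ E := by
  intro s
  induction s with
  | zero =>
    intro _ u v m m' _ _
    exact ⟨u, v, by simp, by simp⟩
  | succ s ih =>
    intro hnd u v m m' hm hm'
    obtain ⟨P, E, h1, h2⟩ := ih (fun i hi1 hi2 => hnd i hi1 (by omega)) u v m m'
      (by omega) (by omega)
    have e1 : m - 2 * s = (m - 2 * (s + 1)) + 2 := by omega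
    have e2 : m' - 2 * s = (m' - 2 * (s + 1)) + 2 := by omega
    rw [Function.iterate_succ_apply', h1, e1, S.step_decomp,
      Function.iterate_succ_apply' S.step s, h2, e2, S.step_decomp]
    have hmid : S.δ (S.aseq X s) (S.aseq X s) (S.aseq X s) = S.aseq X (s + 1) :=
      (S.aseq_succ X s).symm
    have hne : S.aseq X (s + 1) ≠ S.del := hnd (s + 1) (by omega) le_rfl
    rw [hmid, S.fl_replicate_ne hne, S.fl_replicate_ne hne]
    exact ⟨_, _, rfl, rfl⟩

/-- Once the background state becomes the delete state, the configuration no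
longer depends on the length of the uniform block. -/
lemma bad (X : S.Q) (j : ℕ) (hj : 1 ≤ j) (hjd : S.aseq X j = S.del)
    (hnd : ∀ i, 1 ≤ i → i < j → S.aseq X i ≠ S.del)
    (u v : List S.Q) (m m' : ℕ) (hm : 2 * j ≤ m) (hm' : 2 * j ≤ m') :
    S.step^[j] (u ++ List.replicate m X ++ v)
      = S.step^[j] (u ++ List.replicate m' X ++ v) := by
  obtain ⟨s, rfl⟩ : ∃ s, j = s + 1 := ⟨j - 1, by omega⟩
  obtain ⟨P, E, h1, h2⟩ := S.good X s (fun i hi1 hi2 => hnd i hi1 (by omega)) u v m m'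
    (by omega) (by omega)
  have e1 : m - 2 * s = (m - 2 * s - 2) + 2 := by omega
  have e2 : m' - 2 * s = (m' - 2 * s - 2) + 2 := by omega
  rw [Function.iterate_succ_apply', h1, e1, S.step_decomp,
    Function.iterate_succ_apply' S.step s, h2, e2, S.step_decomp]
  have hmid : S.δ (S.aseq X s) (S.aseq X s) (S.aseq X s) = S.del := by
    rw [← S.aseq_succ]; exact hjd
  rw [hmid, S.fl_replicate_eq rfl, S.fl_replicate_eq rfl]

/-- The background state must eventually become the delete state, since a block
`x^(2t+1)` vanishes after `t` steps. -/
lemma exists_del (X : S.Q) (t : ℕ)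
    (hdel : S.step^[t] (List.replicate (2 * t + 1) X) = []) :
    ∃ j, 1 ≤ j ∧ j ≤ t ∧ S.aseq X j = S.del ∧
      ∀ i, 1 ≤ i → i < j → S.aseq X i ≠ S.del := by
  classical
  by_cases h : ∃ i, 1 ≤ i ∧ i ≤ t ∧ S.aseq X i = S.del
  · obtain ⟨hj1, hjt, hjd⟩ := Nat.find_spec h
    refine ⟨Nat.find h, hj1, hjt, hjd, fun i hi1 hi2 hid => ?_⟩
    exact Nat.find_min h hi2 ⟨hi1, by omega, hid⟩
  · push_neg at h
    obtain ⟨P, E, h1, _⟩ := S.good X t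
      (fun i hi1 hi2 => fun hc => (h i hi1 hi2) hc) [] [] (2 * t + 1) (2 * t + 1)
      le_rfl le_rfl
    rw [List.nil_append, List.append_nil] at h1
    rw [hdel] at h1
    have : 2 * t + 1 - 2 * t = 1 := by omega
    rw [this] at h1
    simp at h1

lemma dropWhile_replicate (p : S.Q → Bool) (n : ℕ) (a : S.Q) :
    List.dropWhile p (List.replicate n a)
      = if p a then [] else List.replicate n a := by
  induction n with
  | zero => simp
  | succ n ih =>
    rw [List.replicate_succ, List.dropWhile_cons]
    by_cases h : p a <;> simp [h, ih, List.replicate_succ]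

/-- The head of the configuration after dropping quiescent cells does not
depend on the length of the (nonempty) uniform middle block. -/
lemma head_eq (p : S.Q → Bool) (P E : List S.Q) (A : S.Q) (k k' : ℕ) :
    ((P ++ List.replicate (k + 1) A ++ E).dropWhile p).head? =
    ((P ++ List.replicate (k' + 1) A ++ E).dropWhile p).head? := by
  have key : ∀ n : ℕ, ((P ++ List.replicate (n + 1) A ++ E).dropWhile p).head? =
      if (P.dropWhile p).isEmpty then (if p A then (E.dropWhile p).head? else some A)
      else (P.dropWhile p).head? := by
    intro n
    rw [List.append_assoc, List.dropWhile_append]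
    by_cases hP : (P.dropWhile p).isEmpty
    · rw [if_pos hP, if_pos hP, List.dropWhile_append, S.dropWhile_replicate]
      by_cases hA : p A
      · simp [hA]
      · rw [if_neg hA, if_neg hA]
        have : (List.replicate (n + 1) A).isEmpty = false := by
          simp [List.replicate_succ]
        rw [if_neg (by simp [this])]
        rw [List.replicate_succ]
        simp
    · rw [if_neg hP, if_neg hP]
      obtain ⟨a, l, hl⟩ : ∃ a l, P.dropWhile p = a :: l := by
        cases hc : P.dropWhile p with
        | nil => rw [hc] at hP; simp at hP
        | cons a l => exact ⟨a, l, rfl⟩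
      rw [hl]; simp
  rw [key k, key k']

end SCA

/-- SCA pumping lemma: if the minimal `t` with `Δ_S^t(x^{2t+1}) = ε` exists,
then `z₁ x^{2t+1} z₂ ∈ L(S)` iff `z₁ x^{2t+1+i} z₂ ∈ L(S)` for all `i`. -/
theorem sca_pumping {α : Type} (S : SCA α) (x : α) (t : ℕ) (ht : 0 < t)
    (hdel : S.step^[t] (List.replicate (2 * t + 1) (S.embed x)) = [])
    (hmin : ∀ t' < t, S.step^[t'] (List.replicate (2 * t + 1) (S.embed x)) ≠ [])
    (z₁ z₂ : List α) (h₁ : z₁ ≠ []) (h₂ : z₂ ≠ []) :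
    z₁ ++ List.replicate (2 * t + 1) x ++ z₂ ∈ S.Lang ↔
      ∀ i : ℕ, z₁ ++ List.replicate (2 * t + 1 + i) x ++ z₂ ∈ S.Lang := by
  classical
  set X := S.embed x with hX
  obtain ⟨j, hj1, hjt, hjd, hnd⟩ := S.exists_del X t hdel
  have hconf : ∀ (m s : ℕ), S.conf (z₁ ++ List.replicate m x ++ z₂) s =
      S.step^[s] (z₁.map S.embed ++ List.replicate m X ++ z₂.map S.embed) := by
    intro m s
    simp [SCA.conf, List.map_append, List.map_replicate, hX]
  have key : ∀ i s, S.AcceptsAt (z₁ ++ List.replicate (2 * t + 1 + i) x ++ z₂) s ↔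
      S.AcceptsAt (z₁ ++ List.replicate (2 * t + 1) x ++ z₂) s := by
    intro i s
    by_cases hs : j ≤ s
    · have hcfg : S.conf (z₁ ++ List.replicate (2 * t + 1 + i) x ++ z₂) s =
          S.conf (z₁ ++ List.replicate (2 * t + 1) x ++ z₂) s := by
        rw [hconf, hconf]
        obtain ⟨r, rfl⟩ : ∃ r, s = r + j := ⟨s - j, by omega⟩
        rw [Function.iterate_add_apply, Function.iterate_add_apply]
        rw [S.bad X j hj1 hjd hnd (z₁.map S.embed) (z₂.map S.embed)
          (2 * t + 1 + i) (2 * t + 1) (by omega) (by omega)]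
      unfold SCA.AcceptsAt
      rw [hcfg]
    · obtain ⟨P, E, h1, h2⟩ := S.good X s (fun i' hi1 hi2 => hnd i' hi1 (by omega))
        (z₁.map S.embed) (z₂.map S.embed) (2 * t + 1 + i) (2 * t + 1)
        (by omega) (by omega)
      unfold SCA.AcceptsAt
      rw [hconf, hconf, h1, h2]
      have e1 : 2 * t + 1 + i - 2 * s = (2 * t - 2 * s + i) + 1 := by omega
      have e2 : 2 * t + 1 - 2 * s = (2 * t - 2 * s) + 1 := by omega
      rw [e1, e2]
      rw [S.head_eq _ P E (S.aseq X s) (2 * t - 2 * s + i) (2 * t - 2 * s)]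
  constructor
  · rintro ⟨t₀, hacc⟩ i
    exact ⟨t₀, (key i t₀).mpr hacc⟩
  · intro h
    have := h 0
    simpa using this
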